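/- Let (A B) be an N×2N matrix of rank N over a field such that A·Bᵀ is symmetric. If A has rank r and the first r columns of A are linearly independent, then the N×N matrix formed by these r columns of A together with the last N−r columns of B is invertible. -/

import Mathlib

open Matrix

theorem mixed_columns_invertible {K : Type*} [Field K] {N r : ℕ} (hr : r ≤ N)
    (A B : Matrix (Fin N) (Fin N) K)
    (hsym : (A * Bᵀ).IsSymm)
    (hrank : (Matrix.fromCols A B).rank = N)
    (hA : A.rank = r)
    (hind : LinearIndependent K (fun j : Fin r => fun i => A i (Fin.castLE hr j))) :
    IsUnit (Matrix.det (fun i j : Fin N => if (j : ℕ) < r then A i j else B i j)) := by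
  classical
  set M : Matrix (Fin N) (Fin N) K := fun i j => if (j : ℕ) < r then A i j else B i j with hM
  rw [isUnit_iff_ne_zero, Ne, ← Matrix.exists_mulVec_eq_zero_iff]
  rintro ⟨v, hv, hMv⟩
  apply hv
  -- split v into its first r and last N - r parts
  set u : Fin N → K := fun j => if (j : ℕ) < r then v j else 0 with hu
  set w : Fin N → K := fun j => if (j : ℕ) < r then 0 else v j with hw
  -- helper for sums supported on the first r coordinates
  have hsum : ∀ g : Fin N → K, (∀ j : Fin N, ¬ ((j : ℕ) < r) → g j = 0) →
      ∑ j, g j = ∑ j : Fin r, g (Fin.castLE hr j) := by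
    intro g hg
    have hmap : ∑ j ∈ Finset.univ.map (Fin.castLEEmb hr), g j
        = ∑ j : Fin r, g (Fin.castLE hr j) := Finset.sum_map Finset.univ (Fin.castLEEmb hr) g
    rw [← hmap]
    symm
    apply Finset.sum_subset (Finset.subset_univ _)
    intro j _ hj
    apply hg
    intro hjr
    refine hj ?_
    simp only [Finset.mem_map, Finset.mem_univ, true_and]
    exact ⟨⟨(j : ℕ), hjr⟩, by ext; simp⟩
  have huw : A *ᵥ u + B *ᵥ w = 0 := by
    funext i
    have hMvi := congrFun hMv i
    simp only [Matrix.mulVec, dotProduct, Pi.zero_apply] at hMvi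
    show (A *ᵥ u) i + (B *ᵥ w) i = 0
    simp only [Matrix.mulVec, dotProduct]
    rw [← Finset.sum_add_distrib, ← hMvi]
    apply Finset.sum_congr rfl
    intro j _
    by_cases h : (j : ℕ) < r <;> simp [hu, hw, hM, h]
  -- kernel-range argument
  set C : Matrix (Fin N) (Fin N ⊕ Fin N) K := fromCols A B with hC
  set D : Matrix (Fin N ⊕ Fin N) (Fin N) K := fromRows Bᵀ (-Aᵀ) with hD
  have hBA : A * Bᵀ = B * Aᵀ := by
    conv_lhs => rw [← hsym.eq]
    rw [Matrix.transpose_mul, Matrix.transpose_transpose]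
  have hCD : C * D = 0 := by
    rw [hC, hD, fromCols_mul_fromRows, Matrix.mul_neg, hBA, add_neg_cancel]
  have hrange_le : LinearMap.range D.mulVecLin ≤ LinearMap.ker C.mulVecLin := by
    rintro y ⟨x, rfl⟩
    rw [LinearMap.mem_ker]
    have h0 : (C * D).mulVecLin x = 0 := by rw [hCD]; simp
    rwa [Matrix.mulVecLin_mul, LinearMap.comp_apply] at h0
  -- finrank of the kernel of C
  have hkerC : Module.finrank K (LinearMap.ker C.mulVecLin) = N := by
    have h1 := LinearMap.finrank_range_add_finrank_ker C.mulVecLin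
    rw [Module.finrank_fintype_fun_eq_card] at h1
    have h2 : Module.finrank K (LinearMap.range C.mulVecLin) = N := hrank
    simp only [Fintype.card_sum, Fintype.card_fin] at h1
    omega
  -- rank of D is N
  have hDrank : Module.finrank K (LinearMap.range D.mulVecLin) = N := by
    have hDT : Dᵀ = fromCols B (-A) := by
      rw [hD, transpose_fromRows, transpose_transpose, transpose_neg, transpose_transpose]
    have hr1 : D.rank = Dᵀ.rank := (Matrix.rank_transpose D).symm
    have hr2 : LinearMap.range (fromCols B (-A)).mulVecLin
        = LinearMap.range (fromCols A B).mulVecLin := by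
      apply le_antisymm
      · rintro y ⟨x, rfl⟩
        refine ⟨Sum.elim (-(x ∘ Sum.inr)) (x ∘ Sum.inl), ?_⟩
        rw [Matrix.mulVecLin_apply, Matrix.mulVecLin_apply, fromCols_mulVec_sumElim]
        conv_rhs => rw [← Sum.elim_comp_inl_inr x]
        rw [fromCols_mulVec_sumElim, Matrix.mulVec_neg, Matrix.neg_mulVec]
        abel
      · rintro y ⟨x, rfl⟩
        refine ⟨Sum.elim (x ∘ Sum.inr) (-(x ∘ Sum.inl)), ?_⟩
        rw [Matrix.mulVecLin_apply, Matrix.mulVecLin_apply, fromCols_mulVec_sumElim]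
        conv_rhs => rw [← Sum.elim_comp_inl_inr x]
        rw [fromCols_mulVec_sumElim, Matrix.mulVec_neg, Matrix.neg_mulVec]
        abel
    have hDr : D.rank = N := by
      rw [hr1, Matrix.rank, hDT, hr2, ← Matrix.rank, hrank]
    exact hDr
  -- range D = ker C
  have hrange_eq : LinearMap.range D.mulVecLin = LinearMap.ker C.mulVecLin :=
    Submodule.eq_of_le_of_finrank_le hrange_le (by rw [hkerC, hDrank])
  have hmem : Sum.elim u w ∈ LinearMap.ker C.mulVecLin := by
    rw [LinearMap.mem_ker, Matrix.mulVecLin_apply, hC, fromCols_mulVec_sumElim, huw]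
  rw [← hrange_eq] at hmem
  obtain ⟨t, ht⟩ := hmem
  rw [Matrix.mulVecLin_apply, hD, fromRows_mulVec] at ht
  have htB : Bᵀ *ᵥ t = u := by
    funext i
    exact congrFun ht (Sum.inl i)
  have htA : (-Aᵀ) *ᵥ t = w := by
    funext i
    exact congrFun ht (Sum.inr i)
  -- t annihilates the first r columns of A, hence all columns of A
  have htA' : Aᵀ *ᵥ t = -w := by
    rw [← htA, Matrix.neg_mulVec, neg_neg]
  -- the dot-product-with-t functional
  set φ : (Fin N → K) →ₗ[K] K :=
    { toFun := fun x => x ⬝ᵥ t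
      map_add' := fun x y => add_dotProduct x y t
      map_smul' := fun c x => smul_dotProduct c x t } with hφ
  have hφcol : ∀ j : Fin r, φ (Aᵀ (Fin.castLE hr j)) = 0 := by
    intro j
    have h1 : (Aᵀ *ᵥ t) (Fin.castLE hr j) = -w (Fin.castLE hr j) := by
      rw [htA']; rfl
    have hw0 : w (Fin.castLE hr j) = 0 := by
      rw [hw]
      simp [j.isLt]
    simp only [hw0, neg_zero] at h1
    simp [hφ, Matrix.mulVec] at h1
    exact h1
  have hspan : Submodule.span K (Set.range Aᵀ)
      = Submodule.span K (Set.range (fun j : Fin r => Aᵀ (Fin.castLE hr j))) := by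
    symm
    apply Submodule.eq_of_le_of_finrank_le
    · apply Submodule.span_mono
      rintro _ ⟨j, rfl⟩
      exact ⟨Fin.castLE hr j, rfl⟩
    · have hfns : (fun j : Fin r => Aᵀ (Fin.castLE hr j))
          = fun j : Fin r => fun i => A i (Fin.castLE hr j) := rfl
      rw [hfns, finrank_span_eq_card hind,
        show Set.range Aᵀ = Set.range A.col from rfl, ← Matrix.rank_eq_finrank_span_cols, hA,
        Fintype.card_fin]
  have hAt : Aᵀ *ᵥ t = 0 := by
    funext j
    have hmem2 : Aᵀ j ∈ Submodule.span K (Set.range (fun j : Fin r => Aᵀ (Fin.castLE hr j))) := by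
      rw [← hspan]
      exact Submodule.subset_span ⟨j, rfl⟩
    have hle : Submodule.span K (Set.range (fun j : Fin r => Aᵀ (Fin.castLE hr j)))
        ≤ LinearMap.ker φ := by
      rw [Submodule.span_le]
      rintro _ ⟨j, rfl⟩
      exact hφcol j
    have h3 := hle hmem2
    rw [LinearMap.mem_ker] at h3
    exact h3
  have hw0 : w = 0 := by
    rw [← htA, Matrix.neg_mulVec, hAt, neg_zero]
  -- now A *ᵥ u = 0, and u is supported on the first r coordinates
  have hAu : A *ᵥ u = 0 := by
    rw [hw0] at huw
    simpa using huw
  have hu0 : ∀ j : Fin r, u (Fin.castLE hr j) = 0 := by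
    have := Fintype.linearIndependent_iff.mp hind (fun j => u (Fin.castLE hr j)) ?_
    · exact this
    · funext i
      have hAui := congrFun hAu i
      simp only [Matrix.mulVec, dotProduct, Pi.zero_apply] at hAui
      have hsupp : ∀ j : Fin N, ¬ ((j : ℕ) < r) → A i j * u j = 0 := by
        intro j hj
        rw [hu]
        simp [hj]
      calc (∑ j : Fin r, u (Fin.castLE hr j) • fun i => A i (Fin.castLE hr j)) i
          = ∑ j : Fin r, A i (Fin.castLE hr j) * u (Fin.castLE hr j) := by
            simp [Finset.sum_apply, mul_comm]
        _ = ∑ j : Fin N, A i j * u j := (hsum _ hsupp).symm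
        _ = 0 := hAui
  funext j
  by_cases h : (j : ℕ) < r
  · have h4 := hu0 ⟨(j : ℕ), h⟩
    rw [hu] at h4
    simpa [h, Fin.castLE] using h4
  · have h5 := congrFun hw0 j
    rw [hw] at h5
    simpa [h] using h5
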